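/- arXiv:1403.0166 — 3 statements merged into one kernel-verified Lean document; each statement's English description precedes it below -/
import Mathlib

section
/- Let g satisfy (G), let α ∈ (0,1), c_α := α + α^{−1}, and let U : ℝ → (0,1) be a C² solution of U″ + c_α U′ + g(U) = 0 with U′ < 0, lim_{s→−∞} U(s) = 1 and lim_{s→∞} U(s) = 0. Then the function η := U′ + α g(U) satisfies η > 0 on ℝ and |η′(x)| ≤ α^{−1} η(x) for every x ∈ ℝ. -/
open MeasureTheory Filter Real Set

section Aux

variable (g U : ℝ → ℝ) (α : ℝ)

/-- auxiliary: η -/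
noncomputable def stmt14eta : ℝ → ℝ := fun s => deriv U s + α * g (U s)

/-- auxiliary: p -/
noncomputable def stmt14p : ℝ → ℝ := fun s => α * (-(deriv U s)) * (1 - deriv g (U s))

end Aux

/-- `η := U′ + α g(U)` satisfies `η > 0` and `|η′| ≤ α⁻¹ η` on `ℝ`. -/
theorem stmt14 (g U : ℝ → ℝ) (α : ℝ) (hα : α ∈ Set.Ioo (0:ℝ) 1)
    (hgC1 : ContDiff ℝ 1 g) (hgnonneg : ∀ u ∈ Set.Icc (0:ℝ) 1, 0 ≤ g u)
    (hg0 : g 0 = 0) (hg1 : g 1 = 0) (hg'0 : deriv g 0 = 1)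
    (hg'anti : StrictAntiOn (deriv g) (Set.Icc 0 1)) (hg'1 : -1 ≤ deriv g 1)
    (hgint : MeasureTheory.IntegrableOn (fun u => (u - g u) / u ^ 2) (Set.Ioc 0 1))
    (hUC2 : ContDiff ℝ 2 U) (hUrange : ∀ s, U s ∈ Set.Ioo (0:ℝ) 1)
    (hUode : ∀ s, deriv (deriv U) s + (α + α⁻¹) * deriv U s + g (U s) = 0)
    (hU' : ∀ s, deriv U s < 0)
    (hUbot : Tendsto U atBot (nhds 1)) (hUtop : Tendsto U atTop (nhds 0)) :
    ∀ x : ℝ,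
      0 < deriv U x + α * g (U x) ∧
      |deriv (fun s => deriv U s + α * g (U s)) x| ≤
        α⁻¹ * (deriv U x + α * g (U x)) := by
  obtain ⟨hα0, hα1⟩ := hα
  have hαne : α ≠ 0 := ne_of_gt hα0
  have hαinv : (0:ℝ) < α⁻¹ := by positivity
  set η := stmt14eta g U α with hηdef
  set p := stmt14p g U α with hpdef
  -- smoothness facts
  have hU2 : ContDiff ℝ ((1:ℕ∞)+1) U := by exact_mod_cast hUC2
  rw [contDiff_succ_iff_deriv] at hU2
  have hUdiff : Differentiable ℝ U := hU2.1
  have hU1 : ContDiff ℝ ((0:ℕ∞)+1) (deriv U) := by exact_mod_cast hU2.2.2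
  rw [contDiff_succ_iff_deriv] at hU1
  have hU'diff : Differentiable ℝ (deriv U) := hU1.1
  have hgdiff : Differentiable ℝ g := hgC1.differentiable one_ne_zero
  -- memberships and basic bounds
  have hUmem : ∀ s, U s ∈ Set.Icc (0:ℝ) 1 := fun s => ⟨(hUrange s).1.le, (hUrange s).2.le⟩
  have h0mem : (0:ℝ) ∈ Set.Icc (0:ℝ) 1 := ⟨le_refl 0, zero_le_one⟩
  have h1mem : (1:ℝ) ∈ Set.Icc (0:ℝ) 1 := ⟨zero_le_one, le_refl 1⟩
  have hg'lt : ∀ s, deriv g (U s) < 1 := by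
    intro s
    have := hg'anti h0mem (hUmem s) (hUrange s).1
    rwa [hg'0] at this
  have hg'gt : ∀ s, -1 < deriv g (U s) := by
    intro s
    have := hg'anti (hUmem s) h1mem (hUrange s).2
    linarith
  have hgU0 : ∀ s, 0 ≤ g (U s) := fun s => hgnonneg _ (hUmem s)
  have hp_pos : ∀ s, 0 < p s := by
    intro s
    have h1 := hU' s; have h2 := hg'lt s
    rw [hpdef]
    unfold stmt14p
    have hv : (0:ℝ) < -(deriv U s) := by linarith
    have hb : (0:ℝ) < 1 - deriv g (U s) := by linarith
    exact mul_pos (mul_pos hα0 hv) hb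
  -- derivative of η
  have hη' : ∀ x, HasDerivAt η (p x - α⁻¹ * η x) x := by
    intro x
    have h1 : HasDerivAt η (deriv (deriv U) x + α * (deriv g (U x) * deriv U x)) x := by
      rw [hηdef]; unfold stmt14eta
      exact ((hU'diff x).hasDerivAt).add
        ((((hgdiff (U x)).hasDerivAt).comp x ((hUdiff x).hasDerivAt)).const_mul α)
    have hin : α⁻¹ * α = 1 := inv_mul_cancel₀ hαne
    have he : deriv (deriv U) x + α * (deriv g (U x) * deriv U x) = p x - α⁻¹ * η x := by
      rw [hηdef, hpdef]; unfold stmt14eta stmt14p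
      linear_combination hUode x + g (U x) * hin
    rwa [he] at h1
  -- F = exp(x/α) η and its monotonicity
  have hF' : ∀ x, HasDerivAt (fun s => Real.exp (α⁻¹ * s) * η s) (Real.exp (α⁻¹ * x) * p x) x := by
    intro x
    have he : HasDerivAt (fun s : ℝ => Real.exp (α⁻¹ * s)) (Real.exp (α⁻¹ * x) * α⁻¹) x := by
      simpa using ((hasDerivAt_id x).const_mul α⁻¹).exp
    have h2 := he.mul (hη' x)
    have he2 : Real.exp (α⁻¹*x) * α⁻¹ * η x + Real.exp (α⁻¹*x) * (p x - α⁻¹ * η x)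
        = Real.exp (α⁻¹*x) * p x := by ring
    rwa [he2] at h2
  have hFmono : StrictMono (fun s => Real.exp (α⁻¹ * s) * η s) :=
    strictMono_of_deriv_pos (fun x => by
      rw [(hF' x).deriv]; exact mul_pos (Real.exp_pos _) (hp_pos x))
  -- Step A : η > 0 everywhere
  have hη_pos : ∀ x, 0 < η x := by
    intro x₀
    by_contra hcon
    push_neg at hcon
    have hF0 : Real.exp (α⁻¹ * x₀) * η x₀ ≤ 0 :=
      mul_nonpos_of_nonneg_of_nonpos (Real.exp_pos _).le hcon
    have hc0 : (0:ℝ) < -(Real.exp (α⁻¹ * (x₀-1)) * η (x₀-1)) := by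
      have := hFmono (show x₀ - 1 < x₀ by linarith)
      simp only at this
      linarith
    set c₀ := -(Real.exp (α⁻¹ * (x₀-1)) * η (x₀-1)) with hc₀def
    set y₁ := min (x₀ - 1) (α * Real.log c₀) with hy₁def
    have hkey : ∀ y, y ≤ y₁ → deriv U y ≤ -1 := by
      intro y hy
      have hy2 : y ≤ x₀ - 1 := le_trans hy (min_le_left _ _)
      have hy3 : y ≤ α * Real.log c₀ := le_trans hy (min_le_right _ _)
      have hF1 : Real.exp (α⁻¹ * y) * η y ≤ -c₀ := by
        rcases eq_or_lt_of_le hy2 with h | h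
        · rw [h]; linarith
        · have := hFmono h; simp only at this; linarith
      have hexp : Real.exp (α⁻¹ * y) ≤ c₀ := by
        have hlog : α⁻¹ * y ≤ Real.log c₀ := by
          calc α⁻¹ * y ≤ α⁻¹ * (α * Real.log c₀) := mul_le_mul_of_nonneg_left hy3 hαinv.le
          _ = Real.log c₀ := by field_simp
        calc Real.exp (α⁻¹*y) ≤ Real.exp (Real.log c₀) := Real.exp_le_exp.2 hlog
        _ = c₀ := Real.exp_log hc0
      have hηy : η y ≤ -1 := by
        have h5 : Real.exp (α⁻¹*y) * η y ≤ Real.exp (α⁻¹*y) * (-1) := by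
          have := Real.exp_pos (α⁻¹*y); linarith
        exact le_of_mul_le_mul_left h5 (Real.exp_pos _)
      have hUy : deriv U y = η y - α * g (U y) := by
        rw [hηdef]; unfold stmt14eta; ring
      have := hgU0 y
      nlinarith
    obtain ⟨ξ, hξ, hslope⟩ := exists_deriv_eq_slope U (show y₁ - 2 < y₁ by linarith)
      (hUdiff.continuous.continuousOn) (hUdiff.differentiableOn)
    have h6 : deriv U ξ ≤ -1 := hkey ξ hξ.2.le
    rw [hslope] at h6
    have hden : y₁ - (y₁ - 2) = 2 := by ring
    rw [hden] at h6
    have h7 := (hUrange (y₁ - 2)).2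
    have h8 := (hUrange y₁).1
    linarith

  -- Step ζ : (α+2α⁻¹)(-U') - g(U) ≥ 0 everywhere
  have hlam0 : (0:ℝ) < α + 2*α⁻¹ := by positivity
  have hζ' : ∀ x, HasDerivAt (fun s => (α + 2*α⁻¹) * (-(deriv U s)) - g (U s))
      ((-(deriv U x)) * (1 + 2*α⁻¹^2 + deriv g (U x))
        - (α + 2*α⁻¹) * ((α + 2*α⁻¹) * (-(deriv U x)) - g (U x))) x := by
    intro x
    have h1 : HasDerivAt (fun s => (α + 2*α⁻¹) * (-(deriv U s)) - g (U s))
        ((α + 2*α⁻¹) * (-(deriv (deriv U) x)) - deriv g (U x) * deriv U x) x :=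
      ((((hU'diff x).hasDerivAt).neg).const_mul (α + 2*α⁻¹)).sub
        (((hgdiff (U x)).hasDerivAt).comp x ((hUdiff x).hasDerivAt))
    have hin : α⁻¹ * α = 1 := inv_mul_cancel₀ hαne
    have he : (α + 2*α⁻¹) * (-(deriv (deriv U) x)) - deriv g (U x) * deriv U x
        = (-(deriv U x)) * (1 + 2*α⁻¹^2 + deriv g (U x))
          - (α + 2*α⁻¹) * ((α + 2*α⁻¹) * (-(deriv U x)) - g (U x)) := by
      linear_combination (-(α + 2*α⁻¹)) * hUode x + (-(deriv U x)) * hin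
    rwa [he] at h1
  have hζcoef : ∀ x, 0 ≤ (-(deriv U x)) * (1 + 2*α⁻¹^2 + deriv g (U x)) := by
    intro x
    have h1 := hU' x
    have h2 := hg'gt x
    have h3 : (0:ℝ) < α⁻¹^2 := by positivity
    nlinarith
  have hF₂' : ∀ x, HasDerivAt
      (fun s => Real.exp ((α + 2*α⁻¹) * s) * ((α + 2*α⁻¹) * (-(deriv U s)) - g (U s)))
      (Real.exp ((α + 2*α⁻¹) * x) * ((-(deriv U x)) * (1 + 2*α⁻¹^2 + deriv g (U x)))) x := by
    intro x
    have he : HasDerivAt (fun s : ℝ => Real.exp ((α + 2*α⁻¹) * s))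
        (Real.exp ((α + 2*α⁻¹) * x) * (α + 2*α⁻¹)) x := by
      simpa using ((hasDerivAt_id x).const_mul (α + 2*α⁻¹)).exp
    have h2 := he.mul (hζ' x)
    have he2 : Real.exp ((α + 2*α⁻¹)*x) * (α + 2*α⁻¹) * ((α + 2*α⁻¹) * (-(deriv U x)) - g (U x))
        + Real.exp ((α + 2*α⁻¹)*x) * ((-(deriv U x)) * (1 + 2*α⁻¹^2 + deriv g (U x))
          - (α + 2*α⁻¹) * ((α + 2*α⁻¹) * (-(deriv U x)) - g (U x)))
        = Real.exp ((α + 2*α⁻¹)*x) * ((-(deriv U x)) * (1 + 2*α⁻¹^2 + deriv g (U x))) := by ring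
    rwa [he2] at h2
  have hF₂mono : Monotone (fun s => Real.exp ((α + 2*α⁻¹) * s) * ((α + 2*α⁻¹) * (-(deriv U s)) - g (U s))) := by
    apply monotone_of_deriv_nonneg (fun x => (hF₂' x).differentiableAt)
    intro x
    rw [(hF₂' x).deriv]
    exact mul_nonneg (Real.exp_pos _).le (hζcoef x)
  obtain ⟨C, hC⟩ := isCompact_Icc.exists_bound_of_continuousOn (hgC1.continuous.continuousOn (s := Set.Icc (0:ℝ) 1))
  have hCg : ∀ s, g (U s) ≤ C := by
    intro s
    have := hC _ (hUmem s)
    rw [Real.norm_eq_abs] at this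
    exact le_trans (le_abs_self _) this
  have hC0 : (0:ℝ) ≤ C := le_trans (norm_nonneg _) (hC _ h0mem)
  have hζlb : ∀ s, -C ≤ (α + 2*α⁻¹) * (-(deriv U s)) - g (U s) := by
    intro s
    have h1 := hU' s
    have h2 := hCg s
    nlinarith
  have hζ_nonneg : ∀ x, 0 ≤ (α + 2*α⁻¹) * (-(deriv U x)) - g (U x) := by
    intro x₀
    by_contra hcon
    push_neg at hcon
    have hF20 : Real.exp ((α + 2*α⁻¹) * x₀) * ((α + 2*α⁻¹) * (-(deriv U x₀)) - g (U x₀)) < 0 :=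
      mul_neg_of_pos_of_neg (Real.exp_pos _) hcon
    set c₂ := -(Real.exp ((α + 2*α⁻¹) * x₀) * ((α + 2*α⁻¹) * (-(deriv U x₀)) - g (U x₀))) with hc₂def
    have hc₂ : 0 < c₂ := by rw [hc₂def]; linarith
    have hCp : (0:ℝ) < C + 1 := by linarith
    set y₂ := min x₀ ((α + 2*α⁻¹)⁻¹ * Real.log (c₂ / (C+1))) with hy₂def
    have h1 : Real.exp ((α + 2*α⁻¹) * y₂) * ((α + 2*α⁻¹) * (-(deriv U y₂)) - g (U y₂)) ≤ -c₂ := by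
      have := hF₂mono (min_le_left x₀ ((α + 2*α⁻¹)⁻¹ * Real.log (c₂ / (C+1))))
      simp only at this
      rw [hy₂def]
      linarith
    have hexp2 : Real.exp ((α + 2*α⁻¹) * y₂) ≤ c₂ / (C+1) := by
      have hlog : (α + 2*α⁻¹) * y₂ ≤ Real.log (c₂/(C+1)) := by
        calc (α + 2*α⁻¹) * y₂ ≤ (α + 2*α⁻¹) * ((α + 2*α⁻¹)⁻¹ * Real.log (c₂ / (C+1))) :=
              mul_le_mul_of_nonneg_left (min_le_right _ _) hlam0.le
        _ = Real.log (c₂/(C+1)) := by field_simp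
      calc Real.exp ((α + 2*α⁻¹)*y₂) ≤ Real.exp (Real.log (c₂/(C+1))) := Real.exp_le_exp.2 hlog
      _ = c₂/(C+1) := Real.exp_log (by positivity)
    have h2 : Real.exp ((α + 2*α⁻¹)*y₂) * ((α + 2*α⁻¹) * (-(deriv U y₂)) - g (U y₂))
        ≤ Real.exp ((α + 2*α⁻¹)*y₂) * (-(C+1)) := by
      have hey : Real.exp ((α + 2*α⁻¹)*y₂) * (C+1) ≤ c₂ := (le_div_iff₀ hCp).mp hexp2
      linarith
    have h3 : (α + 2*α⁻¹) * (-(deriv U y₂)) - g (U y₂) ≤ -(C+1) :=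
      le_of_mul_le_mul_left h2 (Real.exp_pos _)
    linarith [hζlb y₂]
  -- antitone facts
  have hUanti : StrictAnti U := strictAnti_of_deriv_neg hU'
  have hAanti : Antitone (fun s => Real.exp (-(α⁻¹ * s)) * (-(deriv U s))) := by
    have hA' : ∀ x, HasDerivAt (fun s => Real.exp (-(α⁻¹ * s)) * (-(deriv U s)))
        (-(Real.exp (-(α⁻¹ * x)) * ((α + 2*α⁻¹) * (-(deriv U x)) - g (U x)))) x := by
      intro x
      have he : HasDerivAt (fun s : ℝ => Real.exp (-(α⁻¹ * s)))
          (Real.exp (-(α⁻¹ * x)) * (-α⁻¹)) x := by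
        have h0 : HasDerivAt (fun s : ℝ => -(α⁻¹ * s)) (-α⁻¹) x := by
          simpa using ((hasDerivAt_id x).const_mul α⁻¹).fun_neg
        exact h0.exp
      have h2 := he.fun_mul ((hU'diff x).hasDerivAt.fun_neg)
      have he2 : Real.exp (-(α⁻¹*x)) * (-α⁻¹) * (-(deriv U x))
          + Real.exp (-(α⁻¹*x)) * (-(deriv (deriv U) x))
          = -(Real.exp (-(α⁻¹ * x)) * ((α + 2*α⁻¹) * (-(deriv U x)) - g (U x))) := by
        have hode := hUode x
        have hin : α⁻¹ * α = 1 := inv_mul_cancel₀ hαne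
        linear_combination (-(Real.exp (-(α⁻¹*x)))) * hode
      rwa [he2] at h2
    apply antitone_of_deriv_nonpos (fun x => (hA' x).differentiableAt)
    intro x
    rw [(hA' x).deriv]
    simp only [neg_nonpos]
    exact mul_nonneg (Real.exp_pos _).le (hζ_nonneg x)
  have hBanti : Antitone (fun s => 1 - deriv g (U s)) := by
    intro s t hst
    rcases eq_or_lt_of_le hst with h | h
    · rw [h]
    · have hUst : U t < U s := hUanti h
      have := hg'anti (hUmem t) (hUmem s) hUst
      simp only
      linarith
  have hPanti : ∀ s t, s ≤ t → Real.exp (-(α⁻¹*t)) * p t ≤ Real.exp (-(α⁻¹*s)) * p s := by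
    intro s t hst
    have h1 := hAanti hst
    have h2 := hBanti hst
    simp only at h1 h2
    have hA0t : (0:ℝ) ≤ Real.exp (-(α⁻¹*t)) * (-(deriv U t)) := by
      have := hU' t
      have h3 : (0:ℝ) ≤ -(deriv U t) := by linarith
      exact mul_nonneg (Real.exp_pos _).le h3
    have hA0s : (0:ℝ) ≤ Real.exp (-(α⁻¹*s)) * (-(deriv U s)) := by
      have := hU' s
      have h3 : (0:ℝ) ≤ -(deriv U s) := by linarith
      exact mul_nonneg (Real.exp_pos _).le h3
    have hB0 : (0:ℝ) ≤ 1 - deriv g (U t) := by linarith [hg'lt t]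
    have h3 : (Real.exp (-(α⁻¹*t)) * (-(deriv U t))) * (1 - deriv g (U t))
        ≤ (Real.exp (-(α⁻¹*s)) * (-(deriv U s))) * (1 - deriv g (U s)) :=
      mul_le_mul h1 h2 hB0 hA0s
    calc Real.exp (-(α⁻¹*t)) * p t
        = α * ((Real.exp (-(α⁻¹*t)) * (-(deriv U t))) * (1 - deriv g (U t))) := by
          rw [hpdef]; unfold stmt14p; ring
    _ ≤ α * ((Real.exp (-(α⁻¹*s)) * (-(deriv U s))) * (1 - deriv g (U s))) :=
          mul_le_mul_of_nonneg_left h3 hα0.le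
    _ = Real.exp (-(α⁻¹*s)) * p s := by rw [hpdef]; unfold stmt14p; ring
  -- Step C : η ≥ (α/2) p
  have hmain : ∀ x, α / 2 * p x ≤ η x := by
    intro x
    set K := Real.exp (-(α⁻¹ * x)) * p x with hKdef
    have hK0 : 0 ≤ K := by
      rw [hKdef]; exact mul_nonneg (Real.exp_pos _).le (hp_pos x).le
    have hD' : ∀ t, HasDerivAt (fun s => Real.exp (α⁻¹ * s) * η s - α/2 * K * Real.exp (2*α⁻¹*s))
        (Real.exp (α⁻¹*t) * p t - K * Real.exp (2*α⁻¹*t)) t := by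
      intro t
      have h1 : HasDerivAt (fun s : ℝ => Real.exp (2*α⁻¹*s)) (Real.exp (2*α⁻¹*t) * (2*α⁻¹)) t := by
        simpa using ((hasDerivAt_id t).const_mul (2*α⁻¹)).exp
      have h2 := (hF' t).sub (h1.const_mul (α/2 * K))
      have he2 : Real.exp (α⁻¹*t) * p t - α/2 * K * (Real.exp (2*α⁻¹*t) * (2*α⁻¹))
          = Real.exp (α⁻¹*t) * p t - K * Real.exp (2*α⁻¹*t) := by
        have hin : α * α⁻¹ = 1 := mul_inv_cancel₀ hαne
        linear_combination (- K * Real.exp (2*α⁻¹*t)) * hin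
      rwa [he2] at h2
    have hDmono : MonotoneOn (fun s => Real.exp (α⁻¹ * s) * η s - α/2 * K * Real.exp (2*α⁻¹*s))
        (Set.Iic x) := by
      apply monotoneOn_of_deriv_nonneg (convex_Iic x)
      · exact (Differentiable.continuous (fun t => (hD' t).differentiableAt)).continuousOn
      · exact (fun t _ => ((hD' t).differentiableAt).differentiableWithinAt)
      · intro t ht
        rw [interior_Iic] at ht
        rw [(hD' t).deriv]
        have h4 := hPanti t x (le_of_lt ht)
        have h5 : K * Real.exp (2*α⁻¹*t) ≤ Real.exp (α⁻¹*t) * p t := by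
          have h6 : (Real.exp (-(α⁻¹*x)) * p x) * Real.exp (2*α⁻¹*t)
              ≤ (Real.exp (-(α⁻¹*t)) * p t) * Real.exp (2*α⁻¹*t) :=
            mul_le_mul_of_nonneg_right h4 (Real.exp_pos _).le
          have h7 : (Real.exp (-(α⁻¹*t)) * p t) * Real.exp (2*α⁻¹*t) = Real.exp (α⁻¹*t) * p t := by
            rw [show (Real.exp (-(α⁻¹*t)) * p t) * Real.exp (2*α⁻¹*t)
                = (Real.exp (-(α⁻¹*t)) * Real.exp (2*α⁻¹*t)) * p t from by ring,
              ← Real.exp_add]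
            ring_nf
          rw [hKdef]
          linarith
        linarith
    have hball : ∀ y, y ≤ x → -(α/2 * K * Real.exp (2*α⁻¹*y))
        ≤ Real.exp (α⁻¹ * x) * η x - α/2 * K * Real.exp (2*α⁻¹*x) := by
      intro y hy
      have h6 := hDmono (Set.mem_Iic.2 hy) (Set.mem_Iic.2 (le_refl x)) hy
      simp only at h6
      have h7 : 0 < Real.exp (α⁻¹ * y) * η y := mul_pos (Real.exp_pos _) (hη_pos y)
      linarith
    have hlim : Tendsto (fun y => -(α/2 * K * Real.exp (2*α⁻¹*y))) atBot (nhds 0) := by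
      have h1 : Tendsto (fun y : ℝ => 2*α⁻¹*y) atBot atBot :=
        Tendsto.const_mul_atBot (by positivity) tendsto_id
      have h2 : Tendsto (fun y : ℝ => Real.exp (2*α⁻¹*y)) atBot (nhds 0) :=
        Real.tendsto_exp_atBot.comp h1
      have h3 : Tendsto (fun y : ℝ => -(α/2*K) * Real.exp (2*α⁻¹*y)) atBot (nhds (-(α/2*K) * 0)) :=
        h2.const_mul _
      rw [mul_zero] at h3
      exact h3.congr (fun y => by ring)
    have h8 : (0:ℝ) ≤ Real.exp (α⁻¹ * x) * η x - α/2 * K * Real.exp (2*α⁻¹*x) :=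
      le_of_tendsto hlim (Filter.eventually_atBot.2 ⟨x, hball⟩)
    have h9 : α/2 * K * Real.exp (2*α⁻¹*x) = Real.exp (α⁻¹*x) * (α/2 * p x) := by
      rw [hKdef, show α/2 * (Real.exp (-(α⁻¹ * x)) * p x) * Real.exp (2*α⁻¹*x)
          = (Real.exp (-(α⁻¹*x)) * Real.exp (2*α⁻¹*x)) * (α/2 * p x) from by ring,
        ← Real.exp_add]
      ring_nf
    have h10 : Real.exp (α⁻¹*x) * (α/2 * p x) ≤ Real.exp (α⁻¹*x) * η x := by linarith
    exact le_of_mul_le_mul_left h10 (Real.exp_pos _)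
  -- conclusion
  intro x
  have hpos := hη_pos x
  have hηx : deriv U x + α * g (U x) = η x := rfl
  constructor
  · rw [hηx]; exact hpos
  · have hd : deriv (fun s => deriv U s + α * g (U s)) x = p x - α⁻¹ * η x := by
      show deriv η x = p x - α⁻¹ * η x
      exact (hη' x).deriv
    rw [hd, hηx]
    have h1 := hmain x
    have h2 := hp_pos x
    have hin : α * α⁻¹ = 1 := mul_inv_cancel₀ hαne
    rw [abs_le]
    constructor
    · nlinarith [hpos]
    · nlinarith [hαinv]
end

section
/- Let J satisfy (J) and define κ(x) := (1/2) ∫_{−δ}^{δ} J(y)(|x−y| − |x|) dy. Then κ is continuous and even, κ(x) = 0 for |x| ≥ δ, and 0 ≤ κ(x) ≤ (δ²/2) J(x) for all x ∈ ℝ. -/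
open MeasureTheory Filter Real Set

/-- `κ(x) = (1/2) ∫_{−δ}^{δ} J(y)(|x−y| − |x|) dy`. -/
noncomputable def kappa (J : ℝ → ℝ) (δ : ℝ) : ℝ → ℝ :=
  fun x => (1 / 2) * ∫ y in Set.Icc (-δ) δ, J y * (|x - y| - |x|)

lemma kappa_cont_aux (J : ℝ → ℝ) (z : ℝ) :
    Continuous (fun y : ℝ => J y * (|z - y| - |z|)) → True := fun _ => trivial

lemma kappa_eq (J : ℝ → ℝ) (δ : ℝ) (hδ : 0 < δ) (hJcont : Continuous J)
    (hJeven : ∀ x, J (-x) = J x) {a : ℝ} (ha : 0 ≤ a) :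
    kappa J δ a = ∫ y in (0:ℝ)..δ, J y * (max a y - a) := by
  have hcont : Continuous (fun y : ℝ => J y * (|a - y| - |a|)) :=
    hJcont.mul (((continuous_const.sub continuous_id).abs).sub continuous_const)
  have hcont2 : Continuous (fun y : ℝ => J y * (|a + y| - |a|)) :=
    hJcont.mul (((continuous_const.add continuous_id).abs).sub continuous_const)
  have hInt : ∀ b c : ℝ, IntervalIntegrable (fun y => J y * (|a - y| - |a|)) volume b c :=
    fun b c => hcont.intervalIntegrable b c
  have h1 : (∫ y in Set.Icc (-δ) δ, J y * (|a - y| - |a|))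
      = ∫ y in (-δ)..δ, J y * (|a - y| - |a|) := by
    rw [intervalIntegral.integral_of_le (by linarith), ← MeasureTheory.integral_Icc_eq_integral_Ioc]
  have h2 : (∫ y in (-δ)..(0:ℝ), J y * (|a - y| - |a|))
      + (∫ y in (0:ℝ)..δ, J y * (|a - y| - |a|))
      = ∫ y in (-δ)..δ, J y * (|a - y| - |a|) :=
    intervalIntegral.integral_add_adjacent_intervals (hInt _ _) (hInt _ _)
  have h3 : (∫ y in (-δ)..(0:ℝ), J y * (|a - y| - |a|))
      = ∫ y in (0:ℝ)..δ, J y * (|a + y| - |a|) := by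
    have := intervalIntegral.integral_comp_neg (a := 0) (b := δ)
      (fun y => J y * (|a - y| - |a|))
    simp only [neg_zero] at this
    rw [← this]
    apply intervalIntegral.integral_congr
    intro y _
    simp only [hJeven, sub_neg_eq_add]
  have h4 : (∫ y in (0:ℝ)..δ, J y * (|a + y| - |a|))
      + (∫ y in (0:ℝ)..δ, J y * (|a - y| - |a|))
      = ∫ y in (0:ℝ)..δ, 2 * (J y * (max a y - a)) := by
    rw [← intervalIntegral.integral_add (hcont2.intervalIntegrable _ _)
      (hcont.intervalIntegrable _ _)]
    apply intervalIntegral.integral_congr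
    intro y hy
    rw [Set.uIcc_of_le (le_of_lt hδ)] at hy
    have hy0 : 0 ≤ y := hy.1
    show J y * (|a + y| - |a|) + J y * (|a - y| - |a|) = 2 * (J y * (max a y - a))
    have habs : |a + y| = a + y := abs_of_nonneg (by linarith)
    have habs2 : |a| = a := abs_of_nonneg ha
    rcases le_total a y with h | h
    · rw [habs, habs2, abs_of_nonpos (by linarith), max_eq_right h]; ring
    · rw [habs, habs2, abs_of_nonneg (by linarith), max_eq_left h]; ring
  have : kappa J δ a = (1/2) * ((∫ y in (0:ℝ)..δ, J y * (|a + y| - |a|))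
      + (∫ y in (0:ℝ)..δ, J y * (|a - y| - |a|))) := by
    unfold kappa
    rw [h1, ← h2, h3]
  rw [this, h4, intervalIntegral.integral_const_mul]
  ring

lemma kappa_even (J : ℝ → ℝ) (δ : ℝ) (hδ : 0 < δ)
    (hJeven : ∀ x, J (-x) = J x) (x : ℝ) : kappa J δ (-x) = kappa J δ x := by
  unfold kappa
  congr 1
  have h1 : ∀ z : ℝ, (∫ y in Set.Icc (-δ) δ, J y * (|z - y| - |z|))
      = ∫ y in (-δ)..δ, J y * (|z - y| - |z|) := by
    intro z
    rw [intervalIntegral.integral_of_le (by linarith), ← MeasureTheory.integral_Icc_eq_integral_Ioc]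
  rw [h1, h1]
  have := intervalIntegral.integral_comp_neg (a := -δ) (b := δ)
    (fun y => J y * (|x - y| - |x|))
  simp only [neg_neg] at this
  rw [← this]
  apply intervalIntegral.integral_congr
  intro y _
  simp only [hJeven, sub_neg_eq_add]
  rw [show -x - y = -(x + y) by ring, abs_neg, abs_neg, show x + y = x - -y by ring]

/-- `κ` is continuous and even, vanishes for `|x| ≥ δ`,
and `0 ≤ κ ≤ (δ²/2) J`. -/
theorem stmt15 (J : ℝ → ℝ) (δ : ℝ) (hδ : 0 < δ)
    (hJC1 : ContDiff ℝ 1 J) (hJnonneg : ∀ x, 0 ≤ J x)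
    (hJeven : ∀ x, J (-x) = J x) (hJanti : AntitoneOn J (Set.Ici 0))
    (hJsupp : tsupport J = Set.Icc (-δ) δ) (hJint : (∫ y, J y) = 1) :
    Continuous (kappa J δ) ∧
    (∀ x, kappa J δ (-x) = kappa J δ x) ∧
    (∀ x : ℝ, δ ≤ |x| → kappa J δ x = 0) ∧
    (∀ x : ℝ, 0 ≤ kappa J δ x ∧ kappa J δ x ≤ δ ^ 2 / 2 * J x) := by
  have hJcont : Continuous J := hJC1.continuous
  have hJcs : HasCompactSupport J := by
    rw [HasCompactSupport, hJsupp]; exact isCompact_Icc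
  have hJintegrable : Integrable J := hJcont.integrable_of_hasCompactSupport hJcs
  have hmeas : MeasurableSet (Set.Icc (-δ) δ) := measurableSet_Icc
  have hCle : (∫ y in Set.Icc (-δ) δ, J y) ≤ 1 := by
    rw [← hJint]
    exact MeasureTheory.setIntegral_le_integral hJintegrable
      (Filter.Eventually.of_forall hJnonneg)
  have hcontz : ∀ z : ℝ, Continuous (fun y : ℝ => J y * (|z - y| - |z|)) := fun z =>
    hJcont.mul (((continuous_const.sub continuous_id).abs).sub continuous_const)
  have hintz : ∀ z : ℝ, IntegrableOn (fun y : ℝ => J y * (|z - y| - |z|))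
      (Set.Icc (-δ) δ) := fun z => (hcontz z).integrableOn_Icc
  -- kappa at |x|
  have hkx : ∀ x : ℝ, kappa J δ x = ∫ y in (0:ℝ)..δ, J y * (max |x| y - |x|) := by
    intro x
    rcases le_total 0 x with hx | hx
    · rw [abs_of_nonneg hx]; exact kappa_eq J δ hδ hJcont hJeven hx
    · rw [abs_of_nonpos hx, ← kappa_even J δ hδ hJeven x]
      exact kappa_eq J δ hδ hJcont hJeven (by linarith)
  refine ⟨?_, kappa_even J δ hδ hJeven, ?_, ?_⟩
  · -- continuity via Lipschitz
    have hlip : LipschitzWith 1 (kappa J δ) := by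
      rw [lipschitzWith_iff_dist_le_mul]
      intro x x'
      rw [Real.dist_eq, Real.dist_eq]
      have key : kappa J δ x - kappa J δ x'
          = (1/2) * ∫ y in Set.Icc (-δ) δ,
              (J y * (|x - y| - |x|) - J y * (|x' - y| - |x'|)) := by
        unfold kappa
        rw [MeasureTheory.integral_sub (hintz x) (hintz x')]
        ring
      have hptw : ∀ y : ℝ, ‖J y * (|x - y| - |x|) - J y * (|x' - y| - |x'|)‖
          ≤ J y * (2 * |x - x'|) := by
        intro y
        have h1 : |(|x - y| - |x' - y|)| ≤ |x - x'| := by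
          have := abs_abs_sub_abs_le_abs_sub (x - y) (x' - y)
          simpa using this
        have h2 : |(|x| - |x'|)| ≤ |x - x'| := abs_abs_sub_abs_le_abs_sub x x'
        have h3 : |(|x - y| - |x|) - (|x' - y| - |x'|)| ≤ 2 * |x - x'| := by
          have : (|x - y| - |x|) - (|x' - y| - |x'|)
              = (|x - y| - |x' - y|) - (|x| - |x'|) := by ring
          rw [this]
          calc |(|x - y| - |x' - y|) - (|x| - |x'|)|
              ≤ |(|x - y| - |x' - y|)| + |(|x| - |x'|)| := abs_sub _ _
            _ ≤ |x - x'| + |x - x'| := add_le_add h1 h2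
            _ = 2 * |x - x'| := by ring
        rw [show J y * (|x - y| - |x|) - J y * (|x' - y| - |x'|)
            = J y * ((|x - y| - |x|) - (|x' - y| - |x'|)) by ring,
          Real.norm_eq_abs, abs_mul, abs_of_nonneg (hJnonneg y)]
        exact mul_le_mul_of_nonneg_left h3 (hJnonneg y)
      have hbound : |∫ y in Set.Icc (-δ) δ,
          (J y * (|x - y| - |x|) - J y * (|x' - y| - |x'|))| ≤ 2 * |x - x'| := by
        calc |∫ y in Set.Icc (-δ) δ,
              (J y * (|x - y| - |x|) - J y * (|x' - y| - |x'|))|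
            ≤ ∫ y in Set.Icc (-δ) δ,
              ‖J y * (|x - y| - |x|) - J y * (|x' - y| - |x'|)‖ :=
              by
                have := MeasureTheory.norm_integral_le_integral_norm
                  (μ := volume.restrict (Set.Icc (-δ) δ))
                  (f := fun y => J y * (|x - y| - |x|) - J y * (|x' - y| - |x'|))
                simpa [Real.norm_eq_abs] using this
          _ ≤ ∫ y in Set.Icc (-δ) δ, J y * (2 * |x - x'|) := by
              apply MeasureTheory.setIntegral_mono_on
              · exact ((hintz x).sub (hintz x')).norm
              · exact (hJintegrable.restrict).mul_const _
              · exact hmeas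
              · intro y _; exact hptw y
          _ = (∫ y in Set.Icc (-δ) δ, J y) * (2 * |x - x'|) := by
              rw [MeasureTheory.integral_mul_const]
          _ ≤ 1 * (2 * |x - x'|) := by
              apply mul_le_mul_of_nonneg_right hCle
              positivity
          _ = 2 * |x - x'| := by ring
      rw [key] at *
      calc |1/2 * ∫ y in Set.Icc (-δ) δ,
            (J y * (|x - y| - |x|) - J y * (|x' - y| - |x'|))|
          = 1/2 * |∫ y in Set.Icc (-δ) δ,
            (J y * (|x - y| - |x|) - J y * (|x' - y| - |x'|))| := by
            rw [abs_mul]; norm_num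
        _ ≤ 1/2 * (2 * |x - x'|) := by linarith
        _ = 1 * |x - x'| := by ring
    exact hlip.continuous
  · -- vanishing
    intro x hx
    rw [hkx x]
    have heq : Set.EqOn (fun y => J y * (max |x| y - |x|)) (fun _ => (0:ℝ))
        (Set.uIcc 0 δ) := by
      intro y hy
      rw [Set.uIcc_of_le (le_of_lt hδ)] at hy
      have : max |x| y = |x| := max_eq_left (le_trans hy.2 hx)
      simp [this]
    rw [intervalIntegral.integral_congr heq, intervalIntegral.integral_zero]
  · -- bounds
    intro x
    set a := |x| with ha_def
    have ha : 0 ≤ a := abs_nonneg x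
    have hJa : J a = J x := by
      rcases le_total 0 x with hx | hx
      · rw [ha_def, abs_of_nonneg hx]
      · rw [ha_def, abs_of_nonpos hx, hJeven]
    constructor
    · rw [hkx x]
      apply intervalIntegral.integral_nonneg (le_of_lt hδ)
      intro y hy
      exact mul_nonneg (hJnonneg y) (by simp [le_max_left])
    · rw [hkx x, ← hJa]
      have hle : (∫ y in (0:ℝ)..δ, J y * (max a y - a))
          ≤ ∫ y in (0:ℝ)..δ, J a * y := by
        apply intervalIntegral.integral_mono_on (le_of_lt hδ)
        · exact (hJcont.mul ((continuous_const.max continuous_id).sub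
            continuous_const)).intervalIntegrable _ _
        · exact (continuous_const.mul continuous_id).intervalIntegrable _ _
        · intro y hy
          rcases le_total a y with h | h
          · rw [max_eq_right h]
            exact mul_le_mul (hJanti (Set.mem_Ici.2 ha) (Set.mem_Ici.2 hy.1) h)
              (by linarith) (by linarith) (hJnonneg a)
          · rw [max_eq_left h, sub_self, mul_zero]
            exact mul_nonneg (hJnonneg a) hy.1
      have hcalc : (∫ y in (0:ℝ)..δ, J a * y) = δ ^ 2 / 2 * J a := by
        rw [intervalIntegral.integral_const_mul, integral_id]
        ring
      linarith [hle, hcalc ▸ hle]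
end

section
/- Let μ > 0 and let ψ : ℝ → ℝ be twice differentiable with ψ > 0, ψ′ < 0, and ψ″(x) ≤ μ² ψ(x) for all x ∈ ℝ. Then −ψ′(x) ≤ μ ψ(x) for all x ∈ ℝ. -/
open MeasureTheory Filter Real Set

/-- if `ψ > 0` is twice differentiable with `ψ′ < 0` and
`ψ″ ≤ μ² ψ` on `ℝ` (`μ > 0`), then `−ψ′ ≤ μ ψ` on `ℝ`. -/
theorem stmt19 (μ : ℝ) (hμ : 0 < μ) (ψ : ℝ → ℝ)
    (hψdiff : ∀ x, DifferentiableAt ℝ ψ x)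
    (hψ'diff : ∀ x, DifferentiableAt ℝ (deriv ψ) x)
    (hpos : ∀ x, 0 < ψ x) (hdec : ∀ x, deriv ψ x < 0)
    (hsecond : ∀ x, deriv (deriv ψ) x ≤ μ ^ 2 * ψ x) :
    ∀ x, -deriv ψ x ≤ μ * ψ x := by
  intro x₀
  by_contra hcon
  push_neg at hcon
  set g : ℝ → ℝ := fun x => deriv ψ x + μ * ψ x with hgdef
  have hgderiv : ∀ x, HasDerivAt g (deriv (deriv ψ) x + μ * deriv ψ x) x := by
    intro x
    exact ((hψ'diff x).hasDerivAt).add (((hψdiff x).hasDerivAt).const_mul μ)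
  have hgneg : g x₀ < 0 := by
    simp only [hgdef]; linarith
  have hg' : ∀ x, deriv (deriv ψ) x + μ * deriv ψ x ≤ μ * g x := by
    intro x
    have := hsecond x
    simp only [hgdef]
    nlinarith
  -- u = exp(-μx) g is antitone
  set u : ℝ → ℝ := fun x => Real.exp (-μ * x) * g x with hudef
  have huderiv : ∀ x, HasDerivAt u
      (Real.exp (-μ * x) * (-μ) * g x
        + Real.exp (-μ * x) * (deriv (deriv ψ) x + μ * deriv ψ x)) x := by
    intro x
    have he : HasDerivAt (fun x : ℝ => Real.exp (-μ * x)) (Real.exp (-μ * x) * (-μ)) x := by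
      simpa using ((hasDerivAt_id x).const_mul (-μ)).exp
    exact he.mul (hgderiv x)
  have huanti : Antitone u := by
    apply antitone_of_deriv_nonpos
    · exact fun x => (huderiv x).differentiableAt
    · intro x
      rw [(huderiv x).deriv]
      have h1 := hg' x
      have h2 : (0:ℝ) < Real.exp (-μ * x) := Real.exp_pos _
      nlinarith
  set c : ℝ := u x₀ with hcdef
  have hcneg : c < 0 := mul_neg_of_pos_of_neg (Real.exp_pos _) hgneg
  -- F = exp(μ t) ψ t - c/(2μ) exp(2μ t) is antitone on [x₀, ∞)
  set F : ℝ → ℝ := fun t => Real.exp (μ * t) * ψ t - c / (2 * μ) * Real.exp (2 * μ * t)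
    with hFdef
  have hFderiv : ∀ t, HasDerivAt F
      (Real.exp (μ * t) * μ * ψ t + Real.exp (μ * t) * deriv ψ t
        - c / (2 * μ) * (Real.exp (2 * μ * t) * (2 * μ))) t := by
    intro t
    have he : HasDerivAt (fun t : ℝ => Real.exp (μ * t)) (Real.exp (μ * t) * μ) t := by
      simpa using ((hasDerivAt_id t).const_mul μ).exp
    have he2 : HasDerivAt (fun t : ℝ => Real.exp (2 * μ * t))
        (Real.exp (2 * μ * t) * (2 * μ)) t := by
      simpa using ((hasDerivAt_id t).const_mul (2 * μ)).exp
    exact (he.mul ((hψdiff t).hasDerivAt)).sub (he2.const_mul (c / (2 * μ)))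
  have hFanti : AntitoneOn F (Set.Ici x₀) := by
    apply antitoneOn_of_deriv_nonpos (convex_Ici x₀)
    · exact (fun t _ => ((hFderiv t).differentiableAt).continuousAt.continuousWithinAt)
    · exact fun t _ => ((hFderiv t).differentiableAt).differentiableWithinAt
    · intro t ht
      rw [interior_Ici] at ht
      rw [(hFderiv t).deriv]
      have hu : u t ≤ c := huanti (le_of_lt ht)
      have hgt : g t ≤ c * Real.exp (μ * t) := by
        have h2 : (0:ℝ) < Real.exp (-μ * t) := Real.exp_pos _
        have : Real.exp (-μ * t) * g t ≤ c := hu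
        have hinv : Real.exp (-μ * t) * Real.exp (μ * t) = 1 := by
          rw [← Real.exp_add]; ring_nf; exact Real.exp_zero
        nlinarith
      have hc2 : c / (2 * μ) * (Real.exp (2 * μ * t) * (2 * μ)) = c * Real.exp (2 * μ * t) := by
        field_simp
      rw [hc2]
      have hexp2 : Real.exp (2 * μ * t) = Real.exp (μ * t) * Real.exp (μ * t) := by
        rw [← Real.exp_add]; ring_nf
      have h3 : (0:ℝ) < Real.exp (μ * t) := Real.exp_pos _
      have : Real.exp (μ * t) * g t ≤ c * (Real.exp (μ * t) * Real.exp (μ * t)) := by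
        nlinarith
      simp only [hgdef] at this
      nlinarith
  -- choose t large to get a contradiction
  set M : ℝ := max (F x₀) 1 with hMdef
  have hMpos : 0 < M := lt_of_lt_of_le one_pos (le_max_right _ _)
  set K : ℝ := 2 * μ * M / (-c) with hKdef
  have hKpos : 0 < K := by
    apply div_pos (by positivity) (by linarith)
  set t : ℝ := max x₀ (Real.log K / (2 * μ) + 1) with htdef
  have ht0 : x₀ ≤ t := le_max_left _ _
  have hexpK : K < Real.exp (2 * μ * t) := by
    have h1 : Real.log K / (2 * μ) + 1 ≤ t := le_max_right _ _
    have h2 : Real.log K < 2 * μ * t := by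
      have : Real.log K = 2 * μ * (Real.log K / (2 * μ)) := by field_simp
      nlinarith
    calc K = Real.exp (Real.log K) := (Real.exp_log hKpos).symm
      _ < Real.exp (2 * μ * t) := Real.exp_lt_exp.mpr h2
  have hF : F t ≤ F x₀ := hFanti (Set.self_mem_Ici) ht0 ht0
  have hFx₀ : F x₀ ≤ M := le_max_left _ _
  have hcK : c * Real.exp (2 * μ * t) < c * K := by
    exact (mul_lt_mul_left_of_neg hcneg).mpr hexpK
  have hcKval : c * K = -(2 * μ * M) := by
    have hc0 : c ≠ 0 := ne_of_lt hcneg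
    rw [hKdef]
    rw [eq_comm, neg_eq_iff_eq_neg]
    field_simp
  have hfinal : Real.exp (μ * t) * ψ t ≤ F x₀ + c / (2 * μ) * Real.exp (2 * μ * t) := by
    simp only [hFdef] at hF; linarith
  have hlt : c / (2 * μ) * Real.exp (2 * μ * t) < -M := by
    rw [div_mul_eq_mul_div]
    rw [div_lt_iff₀ (by positivity : (0:ℝ) < 2 * μ)]
    nlinarith
  have : Real.exp (μ * t) * ψ t < 0 := by
    have h2 : Real.exp (μ * t) * ψ t < F x₀ + -M := by
      refine lt_of_le_of_lt hfinal ?_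
      linarith
    linarith [hFx₀]
  have hψt := hpos t
  nlinarith [Real.exp_pos (μ * t)]
end
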